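/- For the α-stable subordinator with Φ(s) = s^α, 0 < α < 1, the Mellin transforms of the perpetuity and the remainder are I(r) = Γ(r)^{1-α} and R(r) = Γ(r)^{α} for all r > 0. -/

import Mathlib

open Real Set

lemma aux_gamma_pow (c : ℝ) (hc : 0 < c) (f : ℝ → ℝ)
    (hpos : ∀ r > (0 : ℝ), 0 < f r) (h1 : f 1 = 1)
    (heq : ∀ r > (0 : ℝ), f (r + 1) = r ^ c * f r)
    (hconv : ConvexOn ℝ (Ioi 0) (fun r => Real.log (f r))) :
    ∀ r > (0 : ℝ), f r = Real.Gamma r ^ c := by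
  set g : ℝ → ℝ := fun r => Real.exp (c⁻¹ * Real.log (f r)) with hg
  have hgconv : ConvexOn ℝ (Ioi 0) (Real.log ∘ g) := by
    have := hconv.smul (le_of_lt (inv_pos.mpr hc))
    convert this using 1
    · rfl
    · rfl
    funext r
    simp [hg, Function.comp, Real.log_exp, smul_eq_mul]
  have hgfe : ∀ {y : ℝ}, 0 < y → g (y + 1) = y * g y := by
    intro y hy
    have hfy := hpos y hy
    rw [hg]
    simp only
    rw [heq y hy, Real.log_mul (by positivity) hfy.ne',
      Real.log_rpow hy, mul_add]
    rw [show c⁻¹ * (c * Real.log y) = Real.log y by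
      field_simp]
    rw [Real.exp_add, Real.exp_log hy]
  have hgpos : ∀ {y : ℝ}, 0 < y → 0 < g y := fun _ => Real.exp_pos _
  have hg1 : g 1 = 1 := by simp [hg, h1]
  have hEq := Real.eq_Gamma_of_log_convex hgconv hgfe (fun {y} hy => hgpos hy) hg1
  intro r hr
  have hgr : g r = Real.Gamma r := hEq hr
  have hfr := hpos r hr
  have hlog : Real.log (g r) = c⁻¹ * Real.log (f r) := by simp [hg]
  have : Real.log (f r) = c * Real.log (Real.Gamma r) := by
    rw [hgr] at hlog
    field_simp at hlog
    linarith [hlog]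
  rw [← Real.log_rpow (Real.Gamma_pos_of_pos hr)] at this
  exact Real.log_injOn_pos (mem_Ioi.mpr hfr)
    (mem_Ioi.mpr (Real.rpow_pos_of_pos (Real.Gamma_pos_of_pos hr) c)) this

theorem stable_perpetuity_remainder_mellin
    (α : ℝ) (hα0 : 0 < α) (hα1 : α < 1)
    (I R : ℝ → ℝ)
    (hIpos : ∀ r > (0 : ℝ), 0 < I r) (hI1 : I 1 = 1)
    (hIeq : ∀ r > (0 : ℝ), I (r + 1) = (r / r ^ α) * I r)
    (hIconv : ConvexOn ℝ (Ioi 0) (fun r => Real.log (I r)))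
    (hRpos : ∀ r > (0 : ℝ), 0 < R r) (hR1 : R 1 = 1)
    (hReq : ∀ r > (0 : ℝ), R (r + 1) = r ^ α * R r)
    (hRconv : ConvexOn ℝ (Ioi 0) (fun r => Real.log (R r))) :
    ∀ r > (0 : ℝ), I r = Real.Gamma r ^ (1 - α) ∧ R r = Real.Gamma r ^ α := by
  have hIeq' : ∀ r > (0 : ℝ), I (r + 1) = r ^ (1 - α) * I r := by
    intro r hr
    rw [hIeq r hr, Real.rpow_sub hr, Real.rpow_one]
  have hI := aux_gamma_pow (1 - α) (by linarith) I hIpos hI1 hIeq' hIconv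
  have hR := aux_gamma_pow α hα0 R hRpos hR1 hReq hRconv
  exact fun r hr => ⟨hI r hr, hR r hr⟩
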